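/- arXiv:2108.09908 — 3 statements merged into one kernel-verified Lean document; each statement's English description precedes it below -/
import Mathlib

section
/- Let U(z) = tanh(z/√2), F″(u) = 3u² − 1, and let κ, c ∈ ℝ. Suppose u₁ : ℝ → ℝ is twice continuously differentiable with u₁ and u₁′ both bounded, and suppose the solvability equation F″(U(z))·u₁(z) − u₁″(z) − κ·U′(z) = c holds for all z ∈ ℝ. Then c = −κS/2, where S = ∫_{−∞}^{+∞} U′(z)² dz = 2√2/3. -/
open Real MeasureTheory

/-- The transition profile `U(z) = tanh(z/√2)`. -/
noncomputable def U (z : ℝ) : ℝ := Real.tanh (z / Real.sqrt 2)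

section Aux
open Filter Topology Set intervalIntegral

lemma hasDerivAt_tanh' (x : ℝ) : HasDerivAt Real.tanh (1 - Real.tanh x ^ 2) x := by
  have h := (Real.hasDerivAt_sinh x).div (Real.hasDerivAt_cosh x) (Real.cosh_pos x).ne'
  have e : ∀ y, Real.tanh y = Real.sinh y / Real.cosh y := fun y => Real.tanh_eq_sinh_div_cosh y
  rw [show (Real.sinh / Real.cosh) = Real.tanh from funext fun y => (e y).symm] at h
  refine h.congr_deriv ?_
  rw [Real.tanh_eq_sinh_div_cosh]
  have hc := (Real.cosh_pos x).ne'
  field_simp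

noncomputable def U' (z : ℝ) : ℝ := (1 - U z ^ 2) / Real.sqrt 2
noncomputable def U'' (z : ℝ) : ℝ := U z ^ 3 - U z

lemma sqrt2_pos : (0:ℝ) < Real.sqrt 2 := Real.sqrt_pos.mpr (by norm_num)
lemma sqrt2_sq : Real.sqrt 2 * Real.sqrt 2 = 2 := Real.mul_self_sqrt (by norm_num)

lemma hasDerivAt_U (z : ℝ) : HasDerivAt U (U' z) z := by
  have h1 : HasDerivAt (fun z : ℝ => z / Real.sqrt 2) (1 / Real.sqrt 2) z := by
    simpa using (hasDerivAt_id z).div_const (Real.sqrt 2)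
  have h2 := (hasDerivAt_tanh' (z / Real.sqrt 2)).comp z h1
  refine h2.congr_deriv ?_
  simp only [U, U'];
  ring

lemma hasDerivAt_U' (z : ℝ) : HasDerivAt U' (U'' z) z := by
  have h1 : HasDerivAt (fun z => 1 - U z ^ 2) (-(2 * U z * U' z)) z := by
    simpa using ((hasDerivAt_U z).pow 2).const_sub 1
  have h2 := h1.div_const (Real.sqrt 2)
  refine h2.congr_deriv ?_
  simp only [U', U'']
  have h := sqrt2_sq
  have h0 := sqrt2_pos.ne'
  field_simp
  rw [Real.sq_sqrt (by norm_num : (0:ℝ) ≤ 2)]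
  nlinarith [sq_nonneg (U z)]

lemma tanh_eq_exp' (x : ℝ) :
    Real.tanh x = (Real.exp (2*x) - 1) / (Real.exp (2*x) + 1) := by
  rw [Real.tanh_eq_sinh_div_cosh, Real.sinh_eq, Real.cosh_eq]
  have h1 : Real.exp (2*x) = Real.exp x * Real.exp x := by
    rw [← Real.exp_add]; ring_nf
  have h2 := Real.exp_ne_zero x
  have h3 : Real.exp (2*x) + 1 ≠ 0 := by positivity
  rw [div_eq_div_iff (by positivity) h3, h1]
  field_simp [Real.exp_neg]
  rw [Real.exp_neg]
  field_simp

lemma tendsto_tanh_atTop' : Tendsto Real.tanh atTop (𝓝 1) := by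
  have he : Tendsto (fun x : ℝ => Real.exp (2*x)) atTop atTop :=
    Real.tendsto_exp_atTop.comp (tendsto_id.const_mul_atTop two_pos)
  have h0 : Tendsto (fun x : ℝ => 2 / (Real.exp (2*x) + 1)) atTop (𝓝 0) :=
    tendsto_const_nhds.div_atTop (he.atTop_add tendsto_const_nhds)
  have h1 : Tendsto (fun x : ℝ => 1 - 2 / (Real.exp (2*x) + 1)) atTop (𝓝 (1 - 0)) :=
    tendsto_const_nhds.sub h0
  rw [sub_zero] at h1
  refine h1.congr fun x => ?_
  have h3 : Real.exp (2*x) + 1 ≠ 0 := by positivity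
  rw [tanh_eq_exp']; field_simp; ring

lemma tendsto_tanh_atBot' : Tendsto Real.tanh atBot (𝓝 (-1)) := by
  have he : Tendsto (fun x : ℝ => Real.exp (2*x)) atBot (𝓝 0) :=
    Real.tendsto_exp_atBot.comp (tendsto_id.const_mul_atBot two_pos)
  have h1 : Tendsto (fun x : ℝ => (Real.exp (2*x) - 1)/(Real.exp (2*x) + 1)) atBot
      (𝓝 ((0 - 1)/(0 + 1))) :=
    (he.sub_const 1).div (he.add_const 1) (by norm_num)
  norm_num at h1
  exact h1.congr fun x => (tanh_eq_exp' x).symm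

lemma one_sub_tanh_sq_nonneg (x : ℝ) : 0 ≤ 1 - Real.tanh x ^ 2 := by
  have h : 1 - Real.tanh x ^ 2 = 1 / Real.cosh x ^ 2 := by
    rw [Real.tanh_eq_sinh_div_cosh]
    have hc := (Real.cosh_pos x).ne'
    field_simp
    exact Real.cosh_sq_sub_sinh_sq x
  rw [h]; positivity

lemma tendsto_U_atTop : Tendsto U atTop (𝓝 1) :=
  tendsto_tanh_atTop'.comp (tendsto_id.atTop_div_const sqrt2_pos)

lemma tendsto_U_atBot : Tendsto U atBot (𝓝 (-1)) :=
  tendsto_tanh_atBot'.comp (tendsto_id.atBot_div_const sqrt2_pos)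

lemma tendsto_U'_atTop : Tendsto U' atTop (𝓝 0) := by
  have h : Tendsto U' atTop (𝓝 ((1 - 1^2) / Real.sqrt 2)) :=
    ((tendsto_const_nhds.sub (tendsto_U_atTop.pow 2)).div_const _)
  simpa using h

lemma tendsto_U'_atBot : Tendsto U' atBot (𝓝 0) := by
  have h : Tendsto U' atBot (𝓝 ((1 - (-1:ℝ)^2) / Real.sqrt 2)) :=
    ((tendsto_const_nhds.sub (tendsto_U_atBot.pow 2)).div_const _)
  simpa using h

lemma tendsto_U''_atTop : Tendsto U'' atTop (𝓝 0) := by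
  have h : Tendsto U'' atTop (𝓝 ((1:ℝ)^3 - 1)) :=
    ((tendsto_U_atTop.pow 3).sub tendsto_U_atTop)
  simpa using h

lemma tendsto_U''_atBot : Tendsto U'' atBot (𝓝 0) := by
  have h : Tendsto U'' atBot (𝓝 ((-1:ℝ)^3 - (-1))) :=
    ((tendsto_U_atBot.pow 3).sub tendsto_U_atBot)
  norm_num at h; exact h

lemma U'_nonneg (z : ℝ) : 0 ≤ U' z :=
  div_nonneg (one_sub_tanh_sq_nonneg _) sqrt2_pos.le

lemma U_even (z : ℝ) : U (-z) = - U z := by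
  simp [U, neg_div, Real.tanh_neg]

/-- An even function integrable on `(0,∞)` is integrable on `ℝ`. -/
lemma integrable_of_even_of_integrableOn_Ioi {f : ℝ → ℝ} (he : ∀ x, f (-x) = f x)
    (h : IntegrableOn f (Ioi 0)) : Integrable f := by
  have int_Iic : IntegrableOn f (Iic 0) := by
    rw [← Measure.map_neg_eq_self (volume : Measure ℝ)]
    have m : MeasurableEmbedding fun x : ℝ => -x := (Homeomorph.neg ℝ).measurableEmbedding
    rw [m.integrableOn_map_iff]
    have : (fun x : ℝ => f (-x)) = f := funext he
    simp_rw [Function.comp_def, this, neg_preimage, neg_Iic, neg_zero]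
    exact Iff.mpr integrableOn_Ici_iff_integrableOn_Ioi h
  rw [← integrableOn_univ, ← Set.Iic_union_Ioi (a := (0:ℝ))]
  exact int_Iic.union h

lemma integrable_U' : Integrable U' := by
  refine integrable_of_even_of_integrableOn_Ioi (fun x => ?_) ?_
  · simp [U', U_even]
  · exact integrableOn_Ioi_deriv_of_nonneg' (fun x _ => hasDerivAt_U x)
      (fun x _ => U'_nonneg x) tendsto_U_atTop

lemma hasDerivAt_G (z : ℝ) :
    HasDerivAt (fun z => (U z - U z ^ 3 / 3) / Real.sqrt 2) (U' z ^ 2) z := by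
  have h1 : HasDerivAt (fun z => U z - U z ^ 3 / 3)
      (U' z - (3 * U z ^ 2 * U' z) / 3) z := by
    refine ((hasDerivAt_U z).sub (((hasDerivAt_U z).pow 3).div_const 3)).congr_deriv ?_
    norm_num
  have h2 := h1.div_const (Real.sqrt 2)
  refine h2.congr_deriv ?_
  rw [show U' z - 3 * U z ^ 2 * U' z / 3 = (1 - U z ^ 2) * U' z from by ring]
  simp only [U']
  ring

lemma tendsto_G_atTop :
    Tendsto (fun z => (U z - U z ^ 3 / 3) / Real.sqrt 2) atTop (𝓝 (Real.sqrt 2 / 3)) := by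
  have h : Tendsto (fun z => (U z - U z ^ 3 / 3) / Real.sqrt 2) atTop
      (𝓝 ((1 - 1^3/3) / Real.sqrt 2)) :=
    (tendsto_U_atTop.sub ((tendsto_U_atTop.pow 3).div_const 3)).div_const _
  convert h using 2
  rw [div_eq_div_iff (by norm_num) sqrt2_pos.ne']
  nlinarith [sqrt2_sq]

lemma tendsto_G_atBot :
    Tendsto (fun z => (U z - U z ^ 3 / 3) / Real.sqrt 2) atBot (𝓝 (-(Real.sqrt 2 / 3))) := by
  have h : Tendsto (fun z => (U z - U z ^ 3 / 3) / Real.sqrt 2) atBot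
      (𝓝 (((-1) - (-1:ℝ)^3/3) / Real.sqrt 2)) :=
    (tendsto_U_atBot.sub ((tendsto_U_atBot.pow 3).div_const 3)).div_const _
  convert h using 2
  rw [eq_div_iff sqrt2_pos.ne']
  norm_num
  linear_combination (1/3 : ℝ) * sqrt2_sq

lemma integrable_U'_sq : Integrable (fun z => U' z ^ 2) := by
  refine integrable_of_even_of_integrableOn_Ioi (fun x => ?_) ?_
  · simp [U', U_even]
  · exact integrableOn_Ioi_deriv_of_nonneg' (fun x _ => hasDerivAt_G x)
      (fun x _ => sq_nonneg _) tendsto_G_atTop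

lemma integral_U'_sq : ∫ z : ℝ, U' z ^ 2 = 2 * Real.sqrt 2 / 3 := by
  have h := integral_of_hasDerivAt_of_tendsto (fun x => hasDerivAt_G x) integrable_U'_sq
    tendsto_G_atBot tendsto_G_atTop
  rw [h]; ring

lemma integral_U' : ∫ z : ℝ, U' z = 2 := by
  have h := integral_of_hasDerivAt_of_tendsto (fun x => hasDerivAt_U x) integrable_U'
    tendsto_U_atBot tendsto_U_atTop
  rw [h]; norm_num

lemma hasDerivAt_U'' (z : ℝ) : HasDerivAt U'' ((3 * U z ^ 2 - 1) * U' z) z := by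
  have h := ((hasDerivAt_U z).pow 3).sub (hasDerivAt_U z)
  refine h.congr_deriv ?_
  push_cast
  ring

end Aux

open Filter Topology Set in
/-- Solvability condition for the first-order inner correction: if `u₁` is a bounded
`C²` function with bounded derivative satisfying `F″(U)u₁ − u₁″ − κU′ = c` on `ℝ`
(with `F″(u) = 3u² − 1`), then `c = −κS/2` where `S = ∫ U′² = 2√2/3`. -/
theorem solvability_condition (κ c : ℝ) (u₁ : ℝ → ℝ)
    (hu₁ : ContDiff ℝ 2 u₁)
    (hbd : ∃ C : ℝ, ∀ z : ℝ, |u₁ z| ≤ C)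
    (hbd' : ∃ C : ℝ, ∀ z : ℝ, |deriv u₁ z| ≤ C)
    (heq : ∀ z : ℝ, (3 * (U z) ^ 2 - 1) * u₁ z - deriv (deriv u₁) z - κ * deriv U z = c) :
    c = -(κ * (∫ z : ℝ, (deriv U z) ^ 2)) / 2 ∧
    (∫ z : ℝ, (deriv U z) ^ 2) = 2 * Real.sqrt 2 / 3 := by
  obtain ⟨C, hC⟩ := hbd
  obtain ⟨C', hC'⟩ := hbd'
  have hDU : deriv U = U' := funext fun z => (hasDerivAt_U z).deriv
  have hd1 : ContDiff ℝ 1 (deriv u₁) := (contDiff_succ_iff_deriv.mp (show ContDiff ℝ (1+1) u₁ by norm_num [hu₁])).2.2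
  have hu1d : ∀ z, HasDerivAt u₁ (deriv u₁ z) z :=
    fun z => (hu₁.differentiable (by norm_num) z).hasDerivAt
  have hu1dd : ∀ z, HasDerivAt (deriv u₁) (deriv (deriv u₁) z) z :=
    fun z => (hd1.differentiable one_ne_zero z).hasDerivAt
  set W : ℝ → ℝ := fun z => deriv u₁ z * U' z - u₁ z * U'' z with hWdef
  have hW : ∀ z, HasDerivAt W (-κ * U' z ^ 2 - c * U' z) z := by
    intro z
    have h := ((hu1dd z).mul (hasDerivAt_U' z)).sub ((hu1d z).mul (hasDerivAt_U'' z))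
    refine h.congr_deriv ?_
    have e := heq z
    rw [show deriv U z = U' z from (hasDerivAt_U z).deriv] at e
    linear_combination (-(U' z)) * e
  have hbound : ∀ z, ‖W z‖ ≤ C' * |U' z| + C * |U'' z| := by
    intro z
    rw [Real.norm_eq_abs]
    calc |deriv u₁ z * U' z - u₁ z * U'' z| ≤ |deriv u₁ z * U' z| + |u₁ z * U'' z| :=
          abs_sub _ _
      _ ≤ C' * |U' z| + C * |U'' z| := by
          rw [abs_mul, abs_mul]
          gcongr <;> first | exact hC' z | exact hC z
  have hWtop : Tendsto W atTop (𝓝 0) := by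
    refine squeeze_zero_norm hbound ?_
    have := (tendsto_U'_atTop.abs.const_mul C').add (tendsto_U''_atTop.abs.const_mul C)
    simpa using this
  have hWbot : Tendsto W atBot (𝓝 0) := by
    refine squeeze_zero_norm hbound ?_
    have := (tendsto_U'_atBot.abs.const_mul C').add (tendsto_U''_atBot.abs.const_mul C)
    simpa using this
  have hint : Integrable (fun z => -κ * U' z ^ 2 - c * U' z) :=
    (integrable_U'_sq.const_mul (-κ)).sub (integrable_U'.const_mul c)
  have hzero : ∫ z : ℝ, (-κ * U' z ^ 2 - c * U' z) = 0 := by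
    rw [integral_of_hasDerivAt_of_tendsto hW hint hWbot hWtop]
    ring
  rw [integral_sub (integrable_U'_sq.const_mul (-κ)) (integrable_U'.const_mul c),
    integral_const_mul, integral_const_mul, integral_U'] at hzero
  rw [hDU]
  refine ⟨?_, integral_U'_sq⟩
  linarith
end

section
/- Let F(u) = (1/4)(u²−1)² and b ∈ ℝ. Suppose u : ℝ → ℝ is twice continuously differentiable, bounded, satisfies u″(z) = F′(u(z)) − b for all z ∈ ℝ, and has limits u(z) → L⁺ as z → +∞ and u(z) → L⁻ as z → −∞ with L⁺ ≠ L⁻. Then b = 0 and {L⁺, L⁻} = {1, −1}; that is, the only pairs of pure phases that a bounded standing-wave profile of the Cahn–Hilliard inner equation can connect are u = +1 and u = −1, with vanishing leading-order chemical potential. -/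
open Real Filter


/-- MVT growth bound on a ray. -/
lemma grow_ray (f : ℝ → ℝ) (hf : Differentiable ℝ f) {ε Z : ℝ}
    (h : ∀ z, Z ≤ z → ε ≤ deriv f z) :
    ∀ y, Z ≤ y → ε * (y - Z) ≤ f y - f Z := by
  intro y hy
  refine (convex_Ici Z).mul_sub_le_image_sub_of_le_deriv hf.continuous.continuousOn
    hf.differentiableOn (fun x hx => h x (le_of_lt (by simpa [interior_Ici] using hx)))
    Z Set.self_mem_Ici y hy hy

/-- A bounded differentiable function cannot have derivative ≥ ε > 0 on a ray. -/
lemma no_pos_slope (u : ℝ → ℝ) (C : ℝ) (hC : ∀ z, |u z| ≤ C)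
    (hd : Differentiable ℝ u) {ε Z : ℝ} (hε : 0 < ε)
    (h : ∀ z, Z ≤ z → ε ≤ deriv u z) : False := by
  have hC0 : 0 ≤ C := (abs_nonneg _).trans (hC Z)
  have hq : 0 ≤ (2*C+1)/ε := by positivity
  have hyZ : Z ≤ Z + (2*C+1)/ε := by linarith
  have h1 := grow_ray u hd h (Z + (2*C+1)/ε) hyZ
  have h2 : ε * (Z + (2*C+1)/ε - Z) = 2*C+1 := by
    rw [add_sub_cancel_left]; exact mul_div_cancel₀ _ (ne_of_gt hε)
  have h3 := abs_le.mp (hC (Z + (2*C+1)/ε))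
  have h4 := abs_le.mp (hC Z)
  rw [h2] at h1
  linarith [h3.2, h4.1]

lemma second_deriv_lim_pos (u : ℝ → ℝ) (C : ℝ) (hC : ∀ z, |u z| ≤ C)
    (hu : ContDiff ℝ 2 u) {c : ℝ} (hc : 0 < c)
    (h : Tendsto (deriv (deriv u)) atTop (nhds c)) : False := by
  have hd1 : Differentiable ℝ u := hu.differentiable (by norm_num)
  have hc1 : ContDiff ℝ 1 (deriv u) := by
    have h2 : ContDiff ℝ (1+1) u := by norm_num; exact hu
    exact (contDiff_succ_iff_deriv.mp h2).2.2
  have hd2 : Differentiable ℝ (deriv u) := hc1.differentiable one_ne_zero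
  have hev : ∀ᶠ z in atTop, c/2 ≤ deriv (deriv u) z :=
    h.eventually (eventually_ge_nhds (by linarith))
  obtain ⟨Z, hZ⟩ := eventually_atTop.mp hev
  have grow1 := grow_ray (deriv u) hd2 hZ
  set W := deriv u Z with hW
  have key : ∀ y, Z + (1 + |W|) * (2/c) ≤ y → (1:ℝ) ≤ deriv u y := by
    intro y hy
    have hq : 0 ≤ (1 + |W|) * (2/c) := by positivity
    have hyZ : Z ≤ y := by linarith
    have h1 := grow1 y hyZ
    have h2 : c/2 * ((1 + |W|) * (2/c)) = 1 + |W| := by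
      field_simp
    have h3 : c/2 * ((1 + |W|) * (2/c)) ≤ c/2 * (y - Z) := by
      apply mul_le_mul_of_nonneg_left _ (by linarith)
      linarith
    have h4 := neg_abs_le W
    rw [h2] at h3
    linarith
  exact no_pos_slope u C hC hd1 one_pos key

lemma second_deriv_lim_zero_atTop (u : ℝ → ℝ) (C : ℝ) (hC : ∀ z, |u z| ≤ C)
    (hu : ContDiff ℝ 2 u) {c : ℝ}
    (h : Tendsto (deriv (deriv u)) atTop (nhds c)) : c = 0 := by
  by_contra hc0
  rcases (Ne.lt_or_gt hc0) with hc | hc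
  · -- c < 0 : apply to -u
    have e1 : deriv (fun z => -u z) = fun z => -deriv u z := funext fun z => deriv.fun_neg
    have e2 : deriv (deriv (fun z => -u z)) = fun z => -deriv (deriv u) z := by
      rw [e1]; exact funext fun z => deriv.fun_neg
    refine second_deriv_lim_pos (fun z => -u z) C (fun z => by simpa using hC z)
      hu.neg (c := -c) (by linarith) ?_
    rw [e2]; exact h.neg
  · exact second_deriv_lim_pos u C hC hu hc h

lemma second_deriv_lim_zero_atBot (u : ℝ → ℝ) (C : ℝ) (hC : ∀ z, |u z| ≤ C)
    (hu : ContDiff ℝ 2 u) {c : ℝ}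
    (h : Tendsto (deriv (deriv u)) atBot (nhds c)) : c = 0 := by
  have e1 : deriv (fun z => u (-z)) = fun z => -deriv u (-z) :=
    funext fun z => deriv_comp_neg ..
  have e2 : deriv (deriv (fun z => u (-z))) = fun z => deriv (deriv u) (-z) := by
    rw [e1]
    funext z
    rw [deriv.fun_neg]
    rw [show (fun z => deriv u (-z)) = fun z => (deriv u) (-z) from rfl]
    rw [deriv_comp_neg (deriv u)]
    ring
  refine second_deriv_lim_zero_atTop (fun z => u (-z)) C (fun z => hC (-z))
    (hu.comp contDiff_neg) ?_
  rw [e2]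
  exact h.comp tendsto_neg_atTop_atBot

lemma derivsq_lim_zero_atTop (u : ℝ → ℝ) (C : ℝ) (hC : ∀ z, |u z| ≤ C)
    (hu : ContDiff ℝ 1 u) {A : ℝ}
    (h : Tendsto (fun z => (deriv u z)^2) atTop (nhds A)) : A = 0 := by
  have hd : Differentiable ℝ u := hu.differentiable one_ne_zero
  have hcont : Continuous (deriv u) := (contDiff_one_iff_deriv.mp hu).2
  have hA0 : 0 ≤ A := ge_of_tendsto h (Eventually.of_forall fun z => sq_nonneg _)
  rcases hA0.eq_or_lt with hA | hA
  · exact hA.symm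
  exfalso
  have hev : ∀ᶠ z in atTop, A/2 ≤ (deriv u z)^2 :=
    h.eventually (eventually_ge_nhds (by linarith))
  obtain ⟨Z, hZ⟩ := eventually_atTop.mp hev
  have hne : ∀ z, Z ≤ z → deriv u z ≠ 0 := by
    intro z hz h0
    have := hZ z hz
    rw [h0] at this
    nlinarith
  have hsq : 0 < Real.sqrt (A/2) := Real.sqrt_pos.mpr (by linarith)
  -- constant sign
  rcases (hne Z le_rfl).lt_or_gt with hneg | hpos
  · -- deriv u Z < 0 : all negative on ray, use -u
    have hallneg : ∀ z, Z ≤ z → deriv u z < 0 := by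
      intro z hz
      rcases (hne z hz).lt_or_gt with h' | h'
      · exact h'
      exfalso
      have hIVT := intermediate_value_Icc hz (hcont.continuousOn (s := Set.Icc Z z))
      have : (0:ℝ) ∈ Set.Icc (deriv u Z) (deriv u z) := ⟨hneg.le, h'.le⟩
      obtain ⟨x, hx, hx0⟩ := hIVT this
      exact hne x hx.1 hx0
    refine no_pos_slope (fun z => -u z) C (fun z => by simpa using hC z) hd.neg hsq
      (Z := Z) (fun z hz => ?_)
    rw [deriv.fun_neg]
    have h1 := hZ z hz
    have h2 : Real.sqrt (A/2) ≤ |deriv u z| := by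
      rw [← Real.sqrt_sq_eq_abs]
      exact Real.sqrt_le_sqrt h1
    rw [abs_of_neg (hallneg z hz)] at h2
    exact h2
  · have hallpos : ∀ z, Z ≤ z → 0 < deriv u z := by
      intro z hz
      rcases (hne z hz).lt_or_gt with h' | h'
      · exfalso
        have hIVT := intermediate_value_Icc' hz (hcont.continuousOn (s := Set.Icc Z z))
        have : (0:ℝ) ∈ Set.Icc (deriv u z) (deriv u Z) := ⟨h'.le, hpos.le⟩
        obtain ⟨x, hx, hx0⟩ := hIVT this
        exact hne x hx.1 hx0
      · exact h'
    refine no_pos_slope u C hC hd hsq (Z := Z) (fun z hz => ?_)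
    have h1 := hZ z hz
    have h2 : Real.sqrt (A/2) ≤ |deriv u z| := by
      rw [← Real.sqrt_sq_eq_abs]
      exact Real.sqrt_le_sqrt h1
    rw [abs_of_pos (hallpos z hz)] at h2
    exact h2

lemma derivsq_lim_zero_atBot (u : ℝ → ℝ) (C : ℝ) (hC : ∀ z, |u z| ≤ C)
    (hu : ContDiff ℝ 1 u) {A : ℝ}
    (h : Tendsto (fun z => (deriv u z)^2) atBot (nhds A)) : A = 0 := by
  refine derivsq_lim_zero_atTop (fun z => u (-z)) C (fun z => hC (-z))
    (hu.comp contDiff_neg) (A := A) ?_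
  have e1 : (fun z => (deriv (fun z => u (-z)) z)^2) = fun z => (deriv u (-z))^2 := by
    funext z
    rw [deriv_comp_neg]
    ring
  rw [e1]
  exact (h.comp tendsto_neg_atTop_atBot)

/-- Derivative of the double-well potential `F(u) = (1/4)(u²−1)²`: `F′(u) = u³ − u`. -/
noncomputable def F' (u : ℝ) : ℝ := u ^ 3 - u

/-- A bounded standing-wave profile of the Cahn–Hilliard inner equation
`u″ = F′(u) − b` connecting two distinct limits `L⁺ ≠ L⁻` forces `b = 0`
and `{L⁺, L⁻} = {1, −1}`. -/
theorem bounded_profile_connects_pure_phases (b Lp Lm : ℝ) (u : ℝ → ℝ)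
    (hu : ContDiff ℝ 2 u)
    (hbd : ∃ C : ℝ, ∀ z : ℝ, |u z| ≤ C)
    (heq : ∀ z : ℝ, deriv (deriv u) z = F' (u z) - b)
    (htop : Tendsto u atTop (nhds Lp))
    (hbot : Tendsto u atBot (nhds Lm))
    (hne : Lp ≠ Lm) :
    b = 0 ∧ ((Lp = 1 ∧ Lm = -1) ∨ (Lp = -1 ∧ Lm = 1)) := by
  obtain ⟨C, hC⟩ := hbd
  have hd : Differentiable ℝ u := hu.differentiable (by norm_num)
  have hc1 : ContDiff ℝ 1 (deriv u) := by
    have h2 : ContDiff ℝ (1+1) u := by norm_num; exact hu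
    exact (contDiff_succ_iff_deriv.mp h2).2.2
  have hw : Differentiable ℝ (deriv u) := hc1.differentiable one_ne_zero
  -- second derivative as explicit function
  have hfun : deriv (deriv u) = fun z => (u z)^3 - u z - b :=
    funext fun z => by rw [heq z, F']
  -- cubic equations at the limits
  have hp : Lp^3 - Lp - b = 0 := by
    refine second_deriv_lim_zero_atTop u C hC hu ?_
    rw [hfun]
    exact ((htop.pow 3).sub htop).sub tendsto_const_nhds
  have hm : Lm^3 - Lm - b = 0 := by
    refine second_deriv_lim_zero_atBot u C hC hu ?_
    rw [hfun]
    exact ((hbot.pow 3).sub hbot).sub tendsto_const_nhds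
  -- energy conservation
  have hE : ∀ z, HasDerivAt
      (fun z => (deriv u z)^2/2 - ((u z)^2 - 1)^2/4 + b * u z) 0 z := by
    intro z
    have h1 : HasDerivAt u (deriv u z) z := (hd z).hasDerivAt
    have h2 : HasDerivAt (deriv u) (deriv (deriv u) z) z := (hw z).hasDerivAt
    have h3 := (((h2.pow 2).div_const 2).sub
      ((((h1.pow 2).sub_const 1).pow 2).div_const 4)).add (h1.const_mul b)
    refine h3.congr_deriv ?_
    rw [heq z, F']
    push_cast [Pi.pow_apply]
    ring
  set E0 := (deriv u 0)^2/2 - ((u 0)^2 - 1)^2/4 + b * u 0 with hE0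
  have hconst : ∀ z, (deriv u z)^2/2 - ((u z)^2 - 1)^2/4 + b * u z = E0 :=
    fun z => is_const_of_deriv_eq_zero (fun x => (hE x).differentiableAt)
      (fun x => (hE x).deriv) z 0
  have hident : (fun z => (deriv u z)^2)
      = (fun x : ℝ => 2*(E0 + (x^2 - 1)^2/4 - b*x)) ∘ u := by
    funext z
    have := hconst z
    simp only [Function.comp]
    linarith
  have hg : Continuous (fun x : ℝ => 2*(E0 + (x^2 - 1)^2/4 - b*x)) := by fun_prop
  have hAp : 2*(E0 + (Lp^2 - 1)^2/4 - b*Lp) = 0 := by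
    refine derivsq_lim_zero_atTop u C hC (hu.of_le (by norm_num)) ?_
    rw [hident]
    exact (hg.tendsto Lp).comp htop
  have hAm : 2*(E0 + (Lm^2 - 1)^2/4 - b*Lm) = 0 := by
    refine derivsq_lim_zero_atBot u C hC (hu.of_le (by norm_num)) ?_
    rw [hident]
    exact (hg.tendsto Lm).comp hbot
  have hEeq : (Lp^2 - 1)^2/4 - b*Lp = (Lm^2 - 1)^2/4 - b*Lm := by linarith
  -- algebra
  have hsub : Lp - Lm ≠ 0 := sub_ne_zero.mpr hne
  have h1 : Lp^2 + Lp*Lm + Lm^2 = 1 := by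
    have hfac : (Lp - Lm) * (Lp^2 + Lp*Lm + Lm^2 - 1) = 0 := by
      linear_combination hp - hm
    rcases mul_eq_zero.mp hfac with h | h
    · exact absurd h hsub
    · linarith
  have key : (Lp + Lm) * (3*Lp*Lm - 1) = 0 := by
    have hfac : (Lp - Lm) * ((Lp + Lm) * (3*Lp*Lm - 1)) = 0 := by
      linear_combination (4:ℝ) * hEeq - (Lp-Lm)*(Lm-3*Lp) * h1 - (4*(Lp-Lm)) * hp
    rcases mul_eq_zero.mp hfac with h | h
    · exact absurd h hsub
    · exact h
  rcases mul_eq_zero.mp key with hs | hq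
  · -- Lp + Lm = 0
    have hm' : Lm = -Lp := by linarith
    subst hm'
    have hp2 : Lp^2 = 1 := by linear_combination h1
    have hb : b = 0 := by linear_combination Lp * hp2 - hp
    refine ⟨hb, ?_⟩
    have hcases : (Lp - 1) * (Lp + 1) = 0 := by linear_combination hp2
    rcases mul_eq_zero.mp hcases with h | h
    · exact Or.inl ⟨by linarith, by linarith⟩
    · exact Or.inr ⟨by linarith, by linarith⟩
  · -- 3 Lp Lm = 1 : contradiction
    have : (Lp - Lm)^2 = 0 := by linear_combination h1 - hq
    exact absurd (sub_eq_zero.mp (pow_eq_zero_iff (by norm_num) |>.mp this)) hne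
end

section
/- Let 0 < α < 1, N ≥ 1 and λ > 0. Suppose u, μ : ℝ^N × (0,∞) → ℝ are such that for each x the map t ↦ u(x,t) is continuously differentiable on [0,∞), for each t the map x ↦ μ(x,t) is twice continuously differentiable, and the bulk equation of the time-fractional Mullins–Sekerka model holds: ∂_t^α u(x,t) = Δμ(x,t) for all (x,t) (Caputo derivative in t, Laplacian in x). Define û(x,t) = u(λx, λ^{3/α} t) and μ̂(x,t) = λ·μ(λx, λ^{3/α} t). Then ∂_t^α û(x,t) = Δμ̂(x,t) for all (x,t) ∈ ℝ^N × (0,∞). (This scaling invariance, with length scale X = λ, time scale T = λ^{3/α} satisfying T^α = X³, and chemical-potential scale M = X^{−1}, underlies the coarsening rate α/3.) -/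
open Real MeasureTheory

/-- The Caputo fractional derivative of order `α` of `f` at `t`:
`∂_t^α f(t) = (1/Γ(1−α)) ∫_0^t (t−τ)^{−α} f′(τ) dτ`. -/
noncomputable def caputoDeriv (α : ℝ) (f : ℝ → ℝ) (t : ℝ) : ℝ :=
  (1 / Real.Gamma (1 - α)) * ∫ τ in (0:ℝ)..t, (t - τ) ^ (-α) * deriv f τ

/-- The Laplacian of a scalar function on `ℝ^N`, as the sum of second partial
derivatives along the standard coordinate directions. -/
noncomputable def laplacian {N : ℕ} (f : EuclideanSpace ℝ (Fin N) → ℝ)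
    (x : EuclideanSpace ℝ (Fin N)) : ℝ :=
  ∑ i : Fin N,
    fderiv ℝ (fun y => fderiv ℝ f y (EuclideanSpace.single i (1:ℝ))) x
      (EuclideanSpace.single i (1:ℝ))

lemma fderiv_comp_smul_apply {N : ℕ} (f : EuclideanSpace ℝ (Fin N) → ℝ) (c : ℝ)
    (y : EuclideanSpace ℝ (Fin N)) (hf : DifferentiableAt ℝ f (c • y))
    (v : EuclideanSpace ℝ (Fin N)) :
    fderiv ℝ (fun z => f (c • z)) y v = c * fderiv ℝ f (c • y) v := by
  have h1 : HasFDerivAt (fun z : EuclideanSpace ℝ (Fin N) => c • z)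
      (c • ContinuousLinearMap.id ℝ (EuclideanSpace ℝ (Fin N))) y :=
    (hasFDerivAt_id y).const_smul c
  have h2 := (hf.hasFDerivAt.comp y h1).fderiv
  rw [show (fun z : EuclideanSpace ℝ (Fin N) => f (c • z)) = f ∘ (fun z => c • z) from rfl, h2]
  simp [mul_comm]

lemma laplacian_scale {N : ℕ} (f : EuclideanSpace ℝ (Fin N) → ℝ) (hf : ContDiff ℝ 2 f)
    (a c : ℝ) (x : EuclideanSpace ℝ (Fin N)) :
    laplacian (fun y => a * f (c • y)) x = a * c ^ 2 * laplacian f (c • x) := by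
  have hdf : Differentiable ℝ f := hf.differentiable two_ne_zero
  have hf1 : ContDiff ℝ 1 (fderiv ℝ f) := hf.fderiv_right le_rfl
  unfold laplacian
  rw [Finset.mul_sum]
  refine Finset.sum_congr rfl fun i _ => ?_
  set v := EuclideanSpace.single i (1 : ℝ)
  have hg : ContDiff ℝ 1 (fun y => fderiv ℝ f y v) := hf1.clm_apply contDiff_const
  have hgd : Differentiable ℝ (fun y => fderiv ℝ f y v) := hg.differentiable one_ne_zero
  have hinner : (fun y => fderiv ℝ (fun z => a * f (c • z)) y v)
      = fun y => (a * c) * fderiv ℝ f (c • y) v := by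
    funext y
    have hdcomp : DifferentiableAt ℝ (fun z => f (c • z)) y :=
      (hdf (c • y)).comp y ((differentiable_id.const_smul c) y)
    rw [fderiv_const_mul hdcomp a]
    simp only [ContinuousLinearMap.coe_smul', Pi.smul_apply, smul_eq_mul]
    rw [fderiv_comp_smul_apply f c y (hdf _) v]
    ring
  rw [hinner]
  have hGd : DifferentiableAt ℝ (fun y => fderiv ℝ f (c • y) v) x :=
    (hgd (c • x)).comp x ((differentiable_id.const_smul c) x)
  rw [fderiv_const_mul hGd (a * c)]
  simp only [ContinuousLinearMap.coe_smul', Pi.smul_apply, smul_eq_mul]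
  rw [fderiv_comp_smul_apply (fun y => fderiv ℝ f y v) c x (hgd _) v]
  ring

lemma caputo_scale (α : ℝ) (f : ℝ → ℝ) (c : ℝ) (hc : 0 < c)
    (hf : ContDiffOn ℝ 1 f (Set.Ici 0)) (t : ℝ) (ht : 0 < t) :
    caputoDeriv α (fun s => f (c * s)) t = c ^ α * caputoDeriv α f (c * t) := by
  have hdf : ∀ σ : ℝ, 0 < σ → DifferentiableAt ℝ f σ := fun σ hσ =>
    ((hf.differentiableOn one_ne_zero).differentiableAt (Ici_mem_nhds hσ))
  set g : ℝ → ℝ := fun σ => ((c * t - σ) / c) ^ (-α) * (c * deriv f σ) with hg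
  have step1 : (∫ τ in (0:ℝ)..t, (t - τ) ^ (-α) * deriv (fun s => f (c * s)) τ)
      = ∫ τ in (0:ℝ)..t, g (c * τ) := by
    apply intervalIntegral.integral_congr_ae
    filter_upwards with τ hτ
    rw [Set.uIoc_of_le ht.le] at hτ
    have hτ0 : 0 < τ := hτ.1
    have hd : deriv (fun s => f (c * s)) τ = c * deriv f (c * τ) := by
      have h1 : HasDerivAt (fun s : ℝ => c * s) c τ := by
        simpa using (hasDerivAt_id τ).const_mul c
      have h2 : HasDerivAt f (deriv f (c * τ)) (c * τ) :=
        (hdf _ (mul_pos hc hτ0)).hasDerivAt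
      have h3 : HasDerivAt (fun s => f (c * s)) (deriv f (c * τ) * c) τ := h2.comp τ h1
      rw [h3.deriv]; ring
    rw [hd, hg]
    have : (c * t - c * τ) / c = t - τ := by field_simp
    simp only [this]
  have step2 : (∫ τ in (0:ℝ)..t, g (c * τ)) = c⁻¹ • ∫ σ in (0:ℝ)..(c * t), g σ := by
    have := intervalIntegral.integral_comp_mul_left g (a := 0) (b := t) hc.ne'
    simpa using this
  have step3 : (∫ σ in (0:ℝ)..(c * t), g σ)
      = (c ^ α * c) * ∫ σ in (0:ℝ)..(c * t), (c * t - σ) ^ (-α) * deriv f σ := by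
    rw [← intervalIntegral.integral_const_mul]
    apply intervalIntegral.integral_congr_ae
    filter_upwards with σ hσ
    rw [Set.uIoc_of_le (by positivity : (0:ℝ) ≤ c * t)] at hσ
    have h1 : 0 ≤ c * t - σ := by linarith [hσ.2]
    simp only [hg]
    rw [Real.div_rpow h1 hc.le, Real.rpow_neg hc.le]
    field_simp
  unfold caputoDeriv
  rw [step1, step2, step3]
  have hc0 : c ≠ 0 := ne_of_gt hc
  simp only [smul_eq_mul]
  have h : ∀ I : ℝ, c⁻¹ * (c ^ α * c * I) = c ^ α * I := fun I => by
    field_simp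
  rw [h]; ring

/-- Scaling invariance of the bulk equation `∂_t^α u = Δμ` of the time-fractional
Mullins–Sekerka model: with `X = λ`, `T = λ^{3/α}` (so `T^α = X³`) and `M = X⁻¹`,
the rescaled pair `û(x,t) = u(λx, λ^{3/α}t)`, `μ̂(x,t) = λ μ(λx, λ^{3/α}t)`
satisfies the same equation; this underlies the `α/3` coarsening rate. -/
theorem mullins_sekerka_bulk_scaling_invariance (α : ℝ) (hα0 : 0 < α) (hα1 : α < 1)
    {N : ℕ} (hN : 1 ≤ N) (lam : ℝ) (hlam : 0 < lam)
    (u μ : EuclideanSpace ℝ (Fin N) → ℝ → ℝ)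
    (hu : ∀ x, ContDiffOn ℝ 1 (u x) (Set.Ici 0))
    (hμ : ∀ t : ℝ, 0 < t → ContDiff ℝ 2 (fun x => μ x t))
    (heq : ∀ x, ∀ t : ℝ, 0 < t →
      caputoDeriv α (u x) t = laplacian (fun y => μ y t) x) :
    ∀ x, ∀ t : ℝ, 0 < t →
      caputoDeriv α (fun s => u (lam • x) (lam ^ (3 / α) * s)) t
        = laplacian (fun y => lam * μ (lam • y) (lam ^ (3 / α) * t)) x := by
  intro x t ht
  have hcpos : 0 < lam ^ (3 / α) := Real.rpow_pos_of_pos hlam _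
  have hct : 0 < lam ^ (3 / α) * t := mul_pos hcpos ht
  rw [caputo_scale α (u (lam • x)) _ hcpos (hu _) t ht, heq _ _ hct,
    laplacian_scale (fun y => μ y (lam ^ (3 / α) * t)) (hμ _ hct) lam lam x]
  have h3 : (lam ^ (3 / α)) ^ α = lam * lam ^ 2 := by
    rw [← Real.rpow_mul hlam.le, div_mul_cancel₀ _ (ne_of_gt hα0),
      show (3:ℝ) = ((3:ℕ):ℝ) by norm_num, Real.rpow_natCast]
    ring
  rw [h3]
end
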